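/- Factorization under vertical concatenation: let T_1 be an ℓ × M balanced table for format (n_1,…,n_ℓ) and T_2 a (d−ℓ) × M balanced table for format (n_{ℓ+1},…,n_d), and let T be their vertical concatenation. Then for all tensors Y ∈ ℂ^{n_1}⊗⋯⊗ℂ^{n_ℓ} and Z ∈ ℂ^{n_{ℓ+1}}⊗⋯⊗ℂ^{n_d}, Δ_T(Y ⊗ Z) = Δ_{T_1}(Y) · Δ_{T_2}(Z). Consequently, if Δ_{T_1} and Δ_{T_2} are nonzero polynomials, so is Δ_T. -/
import Mathlib


open scoped Classical

/-- Sign contribution of one row `t` of a balanced table with `K` blocks: the product, over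
the blocks of positions carrying equal entry `v ∈ {0,…,K−1}`, of the sign of the sequence of
`σ`-values read along the block in increasing position order (`0` if this sequence is not a
permutation of `[n_i]`); the sign of a permutation is computed as `(−1)^inversions`. -/
noncomputable def rowSgn (M ni K : ℕ) (t : Fin M → ℕ) (σ : Fin M → Fin ni) : ℤ :=
  ∏ v ∈ Finset.range K,
    if ∀ x : Fin ni, ∃! p : Fin M, t p = v ∧ σ p = x then
      (-1 : ℤ) ^ Set.ncard {pq : Fin M × Fin M |
        pq.1 < pq.2 ∧ t pq.1 = v ∧ t pq.2 = v ∧ σ pq.2 < σ pq.1}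
    else 0

/-- The invariant polynomial `Δ_T` of a `d × M` balanced table `T` (with entries of row `i`
in `{0,…,M/n_i − 1}`), as a function of hypermatrices `X` of format `n_1 × ⋯ × n_d`:
`Δ_T(X) = Σ_{σ_1,…,σ_d} ∏_i sgn_{T_i}(σ_i) · ∏_{p=1}^M X_{σ_1(p),…,σ_d(p)}`. -/
noncomputable def Delta (d M : ℕ) (n : Fin d → ℕ) (T : Fin d → Fin M → ℕ)
    (X : ((i : Fin d) → Fin (n i)) → ℂ) : ℂ :=
  ∑ σ : (i : Fin d) → Fin M → Fin (n i),
    ((∏ i, rowSgn M (n i) (M / n i) (T i) (σ i) : ℤ) : ℂ) *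
      ∏ p : Fin M, X fun i => σ i p

/-- `T` is a `d × M` balanced table for the format `n`: row `i` has entries in
`{0,…,M/n_i − 1}` and contains each such value exactly `n i` times. -/
def IsBalanced (d M : ℕ) (n : Fin d → ℕ) (T : Fin d → Fin M → ℕ) : Prop :=
  ∀ i : Fin d, (∀ p, T i p < M / n i) ∧
    ∀ v : ℕ, v < M / n i → Set.ncard {p : Fin M | T i p = v} = n i

noncomputable def splitEquiv (l r : ℕ) (β : Fin (l + r) → Type*) :
    ((i : Fin (l + r)) → β i) ≃
      (((i : Fin l) → β (Fin.castAdd r i)) × ((i : Fin r) → β (Fin.natAdd l i))) where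
  toFun f := (fun i => f (Fin.castAdd r i), fun i => f (Fin.natAdd l i))
  invFun p := fun i => Fin.addCases (motive := fun i => β i) p.1 p.2 i
  left_inv f := by
    funext i
    refine Fin.addCases (fun i => ?_) (fun i => ?_) i <;> simp
  right_inv p := by
    ext i <;> simp

/-- Factorization under vertical concatenation: if `T` is the vertical
concatenation of an `ℓ × M` balanced table `T₁` (format `n_1,…,n_ℓ`) and an `(d−ℓ) × M`
balanced table `T₂` (format `n_{ℓ+1},…,n_d`), then `Δ_T(Y ⊗ Z) = Δ_{T₁}(Y) · Δ_{T₂}(Z)`;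
consequently if `Δ_{T₁}` and `Δ_{T₂}` are nonzero polynomials, so is `Δ_T`. -/
theorem delta_vertical_concat (l r M : ℕ) (n : Fin (l + r) → ℕ)
    (T₁ : Fin l → Fin M → ℕ) (T₂ : Fin r → Fin M → ℕ)
    (h₁ : IsBalanced l M (fun i => n (Fin.castAdd r i)) T₁)
    (h₂ : IsBalanced r M (fun i => n (Fin.natAdd l i)) T₂) :
    (∀ (Y : ((i : Fin l) → Fin (n (Fin.castAdd r i))) → ℂ)
        (Z : ((i : Fin r) → Fin (n (Fin.natAdd l i))) → ℂ),
      Delta (l + r) M n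
          (fun i => Fin.addCases (motive := fun _ => Fin M → ℕ) T₁ T₂ i)
          (fun v => Y (fun i => v (Fin.castAdd r i)) * Z fun i => v (Fin.natAdd l i))
        = Delta l M (fun i => n (Fin.castAdd r i)) T₁ Y *
            Delta r M (fun i => n (Fin.natAdd l i)) T₂ Z) ∧
    ((∃ Y, Delta l M (fun i => n (Fin.castAdd r i)) T₁ Y ≠ 0) →
      (∃ Z, Delta r M (fun i => n (Fin.natAdd l i)) T₂ Z ≠ 0) →
      ∃ X : ((i : Fin (l + r)) → Fin (n i)) → ℂ,
        Delta (l + r) M n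
          (fun i => Fin.addCases (motive := fun _ => Fin M → ℕ) T₁ T₂ i) X ≠ 0) := by

  have key : ∀ (Y : ((i : Fin l) → Fin (n (Fin.castAdd r i))) → ℂ)
        (Z : ((i : Fin r) → Fin (n (Fin.natAdd l i))) → ℂ),
      Delta (l + r) M n
          (fun i => Fin.addCases (motive := fun _ => Fin M → ℕ) T₁ T₂ i)
          (fun v => Y (fun i => v (Fin.castAdd r i)) * Z fun i => v (Fin.natAdd l i))
        = Delta l M (fun i => n (Fin.castAdd r i)) T₁ Y *
            Delta r M (fun i => n (Fin.natAdd l i)) T₂ Z := by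
    intro Y Z
    unfold Delta
    rw [← Equiv.sum_comp (splitEquiv l r (fun i => Fin M → Fin (n i))).symm,
      Fintype.sum_prod_type, Finset.sum_mul_sum]
    refine Finset.sum_congr rfl fun σ₁ _ => Finset.sum_congr rfl fun σ₂ _ => ?_
    simp only [splitEquiv, Equiv.coe_fn_symm_mk]
    rw [Fin.prod_univ_add]
    simp only [Fin.addCases_left, Fin.addCases_right, Finset.prod_mul_distrib]
    push_cast
    ring
  refine ⟨key, ?_⟩
  rintro ⟨Y, hY⟩ ⟨Z, hZ⟩
  exact ⟨fun v => Y (fun i => v (Fin.castAdd r i)) * Z fun i => v (Fin.natAdd l i),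
    by rw [key Y Z]; exact mul_ne_zero hY hZ⟩
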